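/- For real x with 0 < x < π, 1 − x·cot(x) = (x²/3)·(1/(1 − (x²/15)/(1 − (x²/35)/(1 − ···)))), i.e., the continued fraction with coefficients c₀ = 1/3 and c_n = −1/((2n+1)(2n+3)) for n ≥ 1 converges to 1 − x cot x. -/

import Mathlib

open Real Filter

open Finset Nat Topology

namespace CotCF

noncomputable def sC (n k : ℕ) : ℝ :=
  (-1)^k * ((n-k).choose k) * (2*(n-k)+1)‼ / ((2*k+1)‼ * (2*n+1)‼)

noncomputable def dC (n k : ℕ) : ℝ :=
  (-1)^k * ((n+1-k).choose k) * (2*(n-k)+1)‼ / ((2*k-1)‼ * (2*n+1)‼)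

lemma choose_cast_id (a k : ℕ) :
    ((a.choose (k+1)):ℝ) * (k+1) = (a.choose k) * ((a:ℝ) - k) := by
  rcases le_or_gt k a with h | h
  · have h1 := congrArg (Nat.cast (R := ℝ)) (Nat.choose_succ_right_eq a k)
    push_cast [Nat.cast_sub h] at h1
    exact h1
  · rw [Nat.choose_eq_zero_of_lt h, Nat.choose_eq_zero_of_lt (h.trans (Nat.lt_succ_self k))]
    simp

lemma key1 (a k : ℕ) : ((a+1).choose (k+1) : ℝ) * (2*a+3)
    = (2*k+2*a+5) * (a.choose (k+1)) + (2*k+3) * (a.choose k) := by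
  have hp : (((a+1).choose (k+1) : ℕ) : ℝ) = a.choose k + a.choose (k+1) := by
    rw [Nat.choose_succ_succ]; push_cast; ring
  have hr := choose_cast_id a k
  rw [hp]
  linear_combination (-2:ℝ) * hr

lemma key2 (a k : ℕ) : ((a+2).choose (k+1) : ℝ) * (2*a+3)
    = (2*k+2*a+5) * ((a+1).choose (k+1)) + (2*k+1) * ((a+1).choose k) := by
  have hp : (((a+2).choose (k+1) : ℕ) : ℝ) = (a+1).choose k + (a+1).choose (k+1) := by
    rw [Nat.choose_succ_succ]; push_cast; ring
  have hr := choose_cast_id (a+1) k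
  push_cast at hr
  rw [hp]
  linear_combination (-2:ℝ) * hr

lemma dfact_s (m : ℕ) : (2*m+3)‼ = (2*m+3) * (2*m+1)‼ := by
  have h : 2*m+3 = (2*m+1)+2 := by omega
  rw [h, Nat.doubleFactorial_add_two]

lemma dfact_odd (k : ℕ) : (2*k+1)‼ = (2*k+1)*(2*k-1)‼ := by
  cases k with
  | zero => rfl
  | succ m =>
    have h1 : 2*(m+1)+1 = 2*m+3 := by omega
    have h2 : 2*(m+1)-1 = 2*m+1 := by omega
    rw [h1, h2, dfact_s]

lemma sC_zero (n : ℕ) : sC n 0 = 1 := by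
  simp [sC, Nat.doubleFactorial]
  exact (Nat.doubleFactorial_pos _).ne'

lemma dC_zero (n : ℕ) : dC n 0 = 1 := by
  simp [dC, Nat.doubleFactorial]
  exact (Nat.doubleFactorial_pos _).ne'

lemma sC_eq_zero {n k : ℕ} (h : n < 2*k) : sC n k = 0 := by
  have : n - k < k := by omega
  simp [sC, Nat.choose_eq_zero_of_lt this]

lemma dC_eq_zero {n k : ℕ} (h : n + 1 < 2*k) : dC n k = 0 := by
  have : n + 1 - k < k := by omega
  simp [dC, Nat.choose_eq_zero_of_lt this]

lemma alg (σ u v w F1 F2 F3 p q e : ℝ) (h2 : F2 ≠ 0) (h3 : F3 ≠ 0)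
    (hA : e ≠ 0) (hB : 2*(p+q)+5 ≠ 0) (hC : 2*(p+q)+3 ≠ 0)
    (H : u * (2*q+3) = (2*p+2*q+5)*v + e*w) :
    -σ * u * ((2*q+3)*F1) / (e*F2*((2*(p+q)+5)*((2*(p+q)+3)*F3)))
      = -σ * v * F1 / (e*F2*((2*(p+q)+3)*F3))
        + -1/((2*(p+q)+3)*(2*(p+q)+5)) * (σ * w * F1/(F2*F3)) := by
  field_simp
  linear_combination (-σ*F1) * H

lemma sC_rec (n k : ℕ) : sC (n+2) (k+1)
    = sC (n+1) (k+1) + (-1 / ((2*(n:ℝ)+3)*(2*(n:ℝ)+5))) * sC n k := by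
  rcases le_or_gt k n with h | h
  · obtain ⟨a, rfl⟩ := Nat.exists_eq_add_of_le h
    unfold sC
    have e1 : k + a + 2 - (k+1) = a + 1 := by omega
    have e2 : k + a + 1 - (k+1) = a := by omega
    have e3 : k + a - k = a := by omega
    rw [e1, e2, e3]
    have N1 : (2*(a+1)+1)‼ = (2*a+3) * (2*a+1)‼ := by
      have : 2*(a+1)+1 = 2*a+3 := by omega
      rw [this, dfact_s]
    have N2 : (2*(k+1)+1)‼ = (2*k+3) * (2*k+1)‼ := by
      have : 2*(k+1)+1 = 2*k+3 := by omega
      rw [this, dfact_s]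
    have N3 : (2*(k+a+2)+1)‼ = (2*(k+a)+5) * ((2*(k+a)+3) * (2*(k+a)+1)‼) := by
      have h1 : 2*(k+a+2)+1 = (2*(k+a)+3)+2 := by omega
      rw [h1, Nat.doubleFactorial_add_two, dfact_s]
    have N4 : (2*(k+a+1)+1)‼ = (2*(k+a)+3) * (2*(k+a)+1)‼ := by
      have : 2*(k+a+1)+1 = 2*(k+a)+3 := by omega
      rw [this, dfact_s]
    rw [N1, N2, N3, N4]
    have H := key1 a k
    push_cast
    have h2 : ((2*k+1)‼ : ℝ) ≠ 0 := by positivity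
    have h3 : ((2*(k+a)+1)‼ : ℝ) ≠ 0 := by positivity
    have hA : 2*(k:ℝ)+3 ≠ 0 := by positivity
    have hB : 2*((k:ℝ)+(a:ℝ))+5 ≠ 0 := by positivity
    have hC : 2*((k:ℝ)+(a:ℝ))+3 ≠ 0 := by positivity
    linear_combination (alg ((-1:ℝ)^k) ((a+1).choose (k+1)) (a.choose (k+1)) (a.choose k)
      ((2*a+1)‼ : ℝ) ((2*k+1)‼ : ℝ) ((2*(k+a)+1)‼ : ℝ) (k:ℝ) (a:ℝ) (2*(k:ℝ)+3)
      h2 h3 hA hB hC H)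
  · rw [sC_eq_zero (by omega), sC_eq_zero (by omega), sC_eq_zero (by omega)]
    ring

lemma dC_rec (n k : ℕ) : dC (n+2) (k+1)
    = dC (n+1) (k+1) + (-1 / ((2*(n:ℝ)+3)*(2*(n:ℝ)+5))) * dC n k := by
  rcases le_or_gt k n with h | h
  · obtain ⟨a, rfl⟩ := Nat.exists_eq_add_of_le h
    unfold dC
    have e1 : k + a + 2 + 1 - (k+1) = a + 2 := by omega
    have e2 : k + a + 1 + 1 - (k+1) = a + 1 := by omega
    have e3 : k + a + 1 - k = a + 1 := by omega
    have e4 : k + a + 2 - (k+1) = a + 1 := by omega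
    have e5 : k + a + 1 - (k+1) = a := by omega
    have e6 : k + a - k = a := by omega
    rw [e1, e2, e3, e5, e6]
    have N1 : (2*(a+1)+1)‼ = (2*a+3) * (2*a+1)‼ := by
      have : 2*(a+1)+1 = 2*a+3 := by omega
      rw [this, dfact_s]
    have N2 : (2*(k+1)-1)‼ = (2*k+1) * (2*k-1)‼ := by
      have : 2*(k+1)-1 = 2*k+1 := by omega
      rw [this, dfact_odd]
    have N3 : (2*(k+a+2)+1)‼ = (2*(k+a)+5) * ((2*(k+a)+3) * (2*(k+a)+1)‼) := by
      have h1 : 2*(k+a+2)+1 = (2*(k+a)+3)+2 := by omega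
      rw [h1, Nat.doubleFactorial_add_two, dfact_s]
    have N4 : (2*(k+a+1)+1)‼ = (2*(k+a)+3) * (2*(k+a)+1)‼ := by
      have : 2*(k+a+1)+1 = 2*(k+a)+3 := by omega
      rw [this, dfact_s]
    rw [N1, N2, N3, N4]
    have H := key2 a k
    push_cast
    have h2 : ((2*k-1)‼ : ℝ) ≠ 0 := by positivity
    have h3 : ((2*(k+a)+1)‼ : ℝ) ≠ 0 := by positivity
    have hA : 2*(k:ℝ)+1 ≠ 0 := by positivity
    have hB : 2*((k:ℝ)+(a:ℝ))+5 ≠ 0 := by positivity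
    have hC : 2*((k:ℝ)+(a:ℝ))+3 ≠ 0 := by positivity
    linear_combination (alg ((-1:ℝ)^k) ((a+2).choose (k+1)) ((a+1).choose (k+1)) ((a+1).choose k)
      ((2*a+1)‼ : ℝ) ((2*k-1)‼ : ℝ) ((2*(k+a)+1)‼ : ℝ) (k:ℝ) (a:ℝ) (2*(k:ℝ)+1)
      h2 h3 hA hB hC H)
  · rw [dC_eq_zero (by omega), dC_eq_zero (by omega), dC_eq_zero (by omega)]
    ring

end CotCF

namespace CotCF2
open CotCF

lemma rep (x : ℝ) (γ : ℕ → ℝ) (T : ℕ → ℝ) (tC : ℕ → ℕ → ℝ)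
    (hrec : ∀ n, T (n+2) = T (n+1) + γ n * x^2 * T n)
    (hz : ∀ n k, n + 1 ≤ k → tC n k = 0)
    (hC0 : ∀ n, tC (n+2) 0 = tC (n+1) 0)
    (hCrec : ∀ n k, tC (n+2) (k+1) = tC (n+1) (k+1) + γ n * tC n k)
    (h0 : T 0 = ∑' k, tC 0 k * x^(2*k))
    (h1 : T 1 = ∑' k, tC 1 k * x^(2*k)) :
    ∀ n, T n = ∑' k, tC n k * x^(2*k) := by
  have hsum : ∀ n, Summable (fun k => tC n k * x^(2*k)) := by
    intro n
    apply summable_of_ne_finset_zero (s := Finset.range (n+1))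
    intro k hk
    rw [hz n k (by simpa using hk), zero_mul]
  have main : ∀ n, T n = (∑' k, tC n k * x^(2*k)) ∧
      T (n+1) = ∑' k, tC (n+1) k * x^(2*k) := by
    intro n
    induction n with
    | zero => exact ⟨h0, h1⟩
    | succ m ih =>
      refine ⟨ih.2, ?_⟩
      have hs1 : Summable (fun k => tC (m+1) (k+1) * x^(2*(k+1))) :=
        (summable_nat_add_iff (f := fun k => tC (m+1) k * x^(2*k)) 1).2 (hsum (m+1))
      have hs2 : Summable (fun k => γ m * x^2 * (tC m k * x^(2*k))) :=
        (hsum m).mul_left _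
      rw [hrec m, ih.1, ih.2]
      rw [Summable.tsum_eq_zero_add (hsum (m+2)), Summable.tsum_eq_zero_add (hsum (m+1))]
      have hterm : ∀ k : ℕ, tC (m+2) (k+1) * x^(2*(k+1))
          = tC (m+1) (k+1) * x^(2*(k+1)) + γ m * x^2 * (tC m k * x^(2*k)) := by
        intro k
        rw [hCrec m k]
        have : x^(2*(k+1)) = x^(2*k) * x^2 := by ring
        rw [this]; ring
      calc tC (m+1) 0 * x ^ (2*0) + (∑' k, tC (m+1) (k+1) * x^(2*(k+1)))
          + γ m * x^2 * (∑' k, tC m k * x^(2*k))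
          = tC (m+2) 0 * x ^ (2*0) + ((∑' k, tC (m+1) (k+1) * x^(2*(k+1)))
            + ∑' k, γ m * x^2 * (tC m k * x^(2*k))) := by
            rw [hC0 m, tsum_mul_left]; ring
        _ = tC (m+2) 0 * x ^ (2*0) + ∑' k, tC (m+2) (k+1) * x^(2*(k+1)) := by
            rw [← Summable.tsum_add hs1 hs2]
            congr 1
            exact (tsum_congr fun k => (hterm k).symm)
  exact fun n => (main n).1

/-- the Nat inequality giving the uniform bound for `sC`. -/
lemma sC_bound_nat : ∀ (k a : ℕ), (a.choose k) * k ! * 2^k * (2*a+1)‼ ≤ (2*(a+k)+1)‼ := by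
  intro k
  induction k with
  | zero => intro a; simp
  | succ i ih =>
    intro a
    have h1 : a.choose (i+1) * (i+1)! = a.choose i * i ! * (a - i) := by
      rw [Nat.factorial_succ]
      calc a.choose (i+1) * ((i+1) * i !) = (a.choose (i+1) * (i+1)) * i ! := by ring
        _ = a.choose i * (a-i) * i ! := by rw [Nat.choose_succ_right_eq]
        _ = a.choose i * i ! * (a-i) := by ring
    have h2 : (2*(a+(i+1))+1)‼ = (2*(a+i)+3) * (2*(a+i)+1)‼ := by
      have : 2*(a+(i+1))+1 = 2*(a+i)+3 := by omega
      rw [this, dfact_s]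
    calc a.choose (i+1) * (i+1)! * 2^(i+1) * (2*a+1)‼
        = (2*(a-i)) * (a.choose i * i ! * 2^i * (2*a+1)‼) := by
          rw [h1]; ring
      _ ≤ (2*(a+i)+3) * (a.choose i * i ! * 2^i * (2*a+1)‼) := by
          apply Nat.mul_le_mul_right
          omega
      _ ≤ (2*(a+i)+3) * (2*(a+i)+1)‼ := by
          apply Nat.mul_le_mul_left
          exact ih a
      _ = (2*(a+(i+1))+1)‼ := h2.symm

lemma dC_bound_nat : ∀ (k a : ℕ), ((a+1).choose k) * k ! * 2^k * (2*a+1)‼ ≤ (2*(a+k)+1)‼ := by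
  intro k
  induction k with
  | zero => intro a; simp
  | succ i ih =>
    intro a
    have h1 : (a+1).choose (i+1) * (i+1)! = (a+1).choose i * i ! * (a + 1 - i) := by
      rw [Nat.factorial_succ]
      calc (a+1).choose (i+1) * ((i+1) * i !) = ((a+1).choose (i+1) * (i+1)) * i ! := by ring
        _ = (a+1).choose i * (a+1-i) * i ! := by rw [Nat.choose_succ_right_eq]
        _ = (a+1).choose i * i ! * (a+1-i) := by ring
    have h2 : (2*(a+(i+1))+1)‼ = (2*(a+i)+3) * (2*(a+i)+1)‼ := by
      have : 2*(a+(i+1))+1 = 2*(a+i)+3 := by omega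
      rw [this, dfact_s]
    calc (a+1).choose (i+1) * (i+1)! * 2^(i+1) * (2*a+1)‼
        = (2*(a+1-i)) * ((a+1).choose i * i ! * 2^i * (2*a+1)‼) := by
          rw [h1]; ring
      _ ≤ (2*(a+i)+3) * ((a+1).choose i * i ! * 2^i * (2*a+1)‼) := by
          apply Nat.mul_le_mul_right
          omega
      _ ≤ (2*(a+i)+3) * (2*(a+i)+1)‼ := by
          apply Nat.mul_le_mul_left
          exact ih a
      _ = (2*(a+(i+1))+1)‼ := h2.symm

lemma fact_odd_eq (k : ℕ) : ((2*k+1)! : ℝ) = (2*k+1)‼ * (2^k * k !) := by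
  have h1 : (2*k+1)! = (2*k+1)‼ * (2*k)‼ := Nat.factorial_eq_mul_doubleFactorial (2*k)
  have h2 : (2*k)‼ = 2^k * k ! := Nat.doubleFactorial_two_mul k
  rw [h1, h2]; push_cast; ring

lemma fact_even_eq (k : ℕ) : ((2*k)! : ℝ) = (2*k-1)‼ * (2^k * k !) := by
  cases k with
  | zero => norm_num [Nat.doubleFactorial]
  | succ m =>
    have h0 : 2*(m+1) = (2*m+1)+1 := by omega
    have h1 : ((2*m+1)+1)! = ((2*m+1)+1)‼ * (2*m+1)‼ := Nat.factorial_eq_mul_doubleFactorial _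
    have h2 : (2*m+1)+1 = 2*(m+1) := by omega
    have h3 : (2*(m+1))‼ = 2^(m+1) * (m+1)! := Nat.doubleFactorial_two_mul (m+1)
    have h4 : 2*(m+1)-1 = 2*m+1 := by omega
    rw [h0, h1, h2, h3, h4]
    push_cast; ring

lemma sC_abs_le (n k : ℕ) : |sC n k| ≤ 1 / (2*k+1)! := by
  have hb : ((n-k).choose k) * k ! * 2^k * (2*(n-k)+1)‼ ≤ (2*n+1)‼ := by
    rcases le_or_gt k n with h | h
    · obtain ⟨a, rfl⟩ := Nat.exists_eq_add_of_le h
      have e : k + a - k = a := by omega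
      rw [e]
      have := sC_bound_nat k a
      have e2 : a + k = k + a := by omega
      rwa [e2] at this
    · rw [Nat.choose_eq_zero_of_lt (show n - k < k by omega)]
      simp
  rw [sC, abs_div, abs_mul, abs_mul]
  have h1 : |(-1:ℝ)^k| = 1 := by rw [abs_pow]; norm_num
  rw [h1, one_mul, Nat.abs_cast, Nat.abs_cast]
  rw [abs_of_pos (by positivity : (0:ℝ) < ((2*k+1)‼ : ℕ) * ((2*n+1)‼ : ℕ))]
  rw [div_le_div_iff₀ (by positivity) (by positivity)]
  rw [fact_odd_eq k]
  have hcast : (((n-k).choose k : ℕ):ℝ) * ((2*(n-k)+1)‼ : ℕ) * ((2*k+1)‼ : ℕ) * (2^k * (k ! : ℕ))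
      ≤ ((2*k+1)‼:ℕ) * ((2*n+1)‼:ℕ) := by
    have := hb
    have h2 : ((n-k).choose k) * k ! * 2^k * (2*(n-k)+1)‼ * (2*k+1)‼ ≤ (2*n+1)‼ * (2*k+1)‼ :=
      Nat.mul_le_mul_right _ this
    calc (((n-k).choose k : ℕ):ℝ) * ((2*(n-k)+1)‼ : ℕ) * ((2*k+1)‼ : ℕ) * (2^k * (k ! : ℕ))
        = ((((n-k).choose k) * k ! * 2^k * (2*(n-k)+1)‼ * (2*k+1)‼ : ℕ) : ℝ) := by
          push_cast; ring
      _ ≤ (((2*n+1)‼ * (2*k+1)‼ : ℕ) : ℝ) := by exact_mod_cast h2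
      _ = ((2*k+1)‼:ℕ) * ((2*n+1)‼:ℕ) := by push_cast; ring
  calc (((n-k).choose k : ℕ):ℝ) * ((2*(n-k)+1)‼ : ℕ) * ((2*k+1)‼ * (2^k * (k ! : ℕ)))
      = (((n-k).choose k : ℕ):ℝ) * ((2*(n-k)+1)‼ : ℕ) * ((2*k+1)‼ : ℕ) * (2^k * (k ! : ℕ)) := by
        push_cast; ring
    _ ≤ ((2*k+1)‼:ℕ) * ((2*n+1)‼:ℕ) := hcast
    _ = 1 * (((2*k+1)‼:ℕ) * ((2*n+1)‼:ℕ)) := by ring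

lemma dC_abs_le (n k : ℕ) : |dC n k| ≤ 1 / (2*k)! := by
  have hb : ((n+1-k).choose k) * k ! * 2^k * (2*(n-k)+1)‼ ≤ (2*n+1)‼ := by
    rcases le_or_gt k n with h | h
    · obtain ⟨a, rfl⟩ := Nat.exists_eq_add_of_le h
      have e : k + a - k = a := by omega
      have e1 : k + a + 1 - k = a + 1 := by omega
      rw [e, e1]
      have := dC_bound_nat k a
      have e2 : a + k = k + a := by omega
      rwa [e2] at this
    · rw [Nat.choose_eq_zero_of_lt (show n + 1 - k < k by omega)]
      simp
  rw [dC, abs_div, abs_mul, abs_mul]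
  have h1 : |(-1:ℝ)^k| = 1 := by rw [abs_pow]; norm_num
  rw [h1, one_mul, Nat.abs_cast, Nat.abs_cast]
  rw [abs_of_pos (by positivity : (0:ℝ) < ((2*k-1)‼ : ℕ) * ((2*n+1)‼ : ℕ))]
  rw [div_le_div_iff₀ (by positivity) (by positivity)]
  rw [fact_even_eq k]
  have h2 : ((n+1-k).choose k) * k ! * 2^k * (2*(n-k)+1)‼ * (2*k-1)‼ ≤ (2*n+1)‼ * (2*k-1)‼ :=
    Nat.mul_le_mul_right _ hb
  calc (((n+1-k).choose k : ℕ):ℝ) * ((2*(n-k)+1)‼ : ℕ) * ((2*k-1)‼ * (2^k * (k ! : ℕ)))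
      = ((((n+1-k).choose k) * k ! * 2^k * (2*(n-k)+1)‼ * (2*k-1)‼ : ℕ) : ℝ) := by
        push_cast; ring
    _ ≤ (((2*n+1)‼ * (2*k-1)‼ : ℕ) : ℝ) := by exact_mod_cast h2
    _ = 1 * (((2*k-1)‼:ℕ) * ((2*n+1)‼:ℕ)) := by push_cast; ring

end CotCF2

namespace CotCF3
open CotCF CotCF2 Topology

lemma denom_ne_zero (n j : ℕ) : 2*(n:ℝ)+1-2*(j:ℝ) ≠ 0 := by
  intro hcon
  have h1 : ((2*n+1 : ℕ) : ℝ) = ((2*j : ℕ) : ℝ) := by push_cast; linarith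
  have h2 : 2*n+1 = 2*j := Nat.cast_injective h1
  omega

lemma tend_factor (c : ℝ) (j : ℕ) :
    Tendsto (fun n : ℕ => ((n:ℝ) - c)/(2*(n:ℝ)+1-2*(j:ℝ))) atTop (𝓝 (1/2)) := by
  have h0 : Tendsto (fun n : ℕ => (1 - c * ((n:ℝ))⁻¹)/(2 + (1-2*(j:ℝ)) * ((n:ℝ))⁻¹))
      atTop (𝓝 ((1 - c*0)/(2+(1-2*(j:ℝ))*0))) := by
    apply Tendsto.div
    · exact tendsto_const_nhds.sub (tendsto_const_nhds.mul tendsto_inv_atTop_nhds_zero_nat)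
    · exact tendsto_const_nhds.add (tendsto_const_nhds.mul tendsto_inv_atTop_nhds_zero_nat)
    · norm_num
  have h1 : ((1:ℝ) - c*0)/(2+(1-2*(j:ℝ))*0) = 1/2 := by norm_num
  rw [h1] at h0
  apply h0.congr'
  filter_upwards [eventually_ge_atTop 1] with n hn
  have hn0 : (n:ℝ) ≠ 0 := by
    simp only [ne_eq, Nat.cast_eq_zero]; omega
  have k1 : (1 : ℝ) - c*((n:ℝ))⁻¹ = ((n:ℝ)-c) * ((n:ℝ))⁻¹ := by field_simp
  have k2 : (2 : ℝ) + (1-2*(j:ℝ))*((n:ℝ))⁻¹ = (2*(n:ℝ)+1-2*(j:ℝ)) * ((n:ℝ))⁻¹ := by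
    field_simp; ring
  rw [k1, k2, mul_div_mul_right _ _ (inv_ne_zero hn0)]

lemma descFactorial_cast (m : ℕ) : ∀ k : ℕ, k ≤ m →
    ((m.descFactorial k : ℕ) : ℝ) = ∏ j ∈ Finset.range k, ((m:ℝ) - j) := by
  intro k
  induction k with
  | zero => simp
  | succ i ih =>
    intro h
    rw [Nat.descFactorial_succ, Finset.prod_range_succ, ← ih (by omega)]
    push_cast [Nat.cast_sub (show i ≤ m by omega)]
    ring

lemma dfact_ratio : ∀ (k n : ℕ), k ≤ n →
    (((2*n+1)‼ : ℕ) : ℝ) = ((2*(n-k)+1)‼ : ℕ) * ∏ j ∈ Finset.range k, (2*(n:ℝ)+1-2*(j:ℝ)) := by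
  intro k
  induction k with
  | zero => simp
  | succ i ih =>
    intro n h
    rw [Finset.prod_range_succ, ih n (by omega)]
    have h2 : ((2*(n-i)+1)‼ : ℕ) = (2*(n-i)+1) * (2*(n-(i+1))+1)‼ := by
      have h1 : 2*(n-i)+1 = (2*(n-(i+1))+1) + 2 := by omega
      rw [h1, Nat.doubleFactorial_add_two]
    rw [h2]
    have h3 : ((n - i : ℕ) : ℝ) = (n:ℝ) - i := Nat.cast_sub (by omega)
    push_cast
    rw [h3]
    ring

lemma sC_prod_form (n k : ℕ) (h : 2*k ≤ n) :
    sC n k = (-1)^k / (((2*k+1)‼ : ℕ) * (k ! : ℕ))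
      * ∏ j ∈ Finset.range k, (((n:ℝ) - k - j)/(2*(n:ℝ)+1-2*(j:ℝ))) := by
  have hc : ((n-k).choose k : ℝ) * (k ! : ℕ) = ∏ j ∈ Finset.range k, ((n:ℝ) - k - j) := by
    have h1 := descFactorial_cast (n-k) k (by omega)
    rw [Nat.descFactorial_eq_factorial_mul_choose] at h1
    have h2 : ∀ j ∈ Finset.range k, (((n-k:ℕ):ℝ) - j) = (n:ℝ) - k - j := by
      intro j _
      rw [Nat.cast_sub (by omega)]
    rw [Finset.prod_congr rfl h2] at h1
    rw [← h1]
    push_cast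
    ring
  rw [sC, dfact_ratio k n (by omega)]
  rw [Finset.prod_div_distrib]
  have hQ : (∏ j ∈ Finset.range k, (2*(n:ℝ)+1-2*(j:ℝ))) ≠ 0 :=
    Finset.prod_ne_zero_iff.2 (fun j _ => denom_ne_zero n j)
  have hP : (∏ j ∈ Finset.range k, ((n:ℝ) - k - j)) = ((n-k).choose k : ℝ) * (k ! : ℕ) := hc.symm
  rw [hP]
  have hd1 : ((2*(n-k)+1)‼ : ℝ) ≠ 0 := by positivity
  have hd2 : ((2*k+1)‼ : ℝ) ≠ 0 := by positivity
  have hd3 : ((k ! : ℕ) : ℝ) ≠ 0 := by positivity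
  field_simp

lemma dC_prod_form (n k : ℕ) (h : 2*k ≤ n) :
    dC n k = (-1)^k / (((2*k-1)‼ : ℕ) * (k ! : ℕ))
      * ∏ j ∈ Finset.range k, (((n:ℝ) + 1 - k - j)/(2*(n:ℝ)+1-2*(j:ℝ))) := by
  have hc : ((n+1-k).choose k : ℝ) * (k ! : ℕ) = ∏ j ∈ Finset.range k, ((n:ℝ) + 1 - k - j) := by
    have h1 := descFactorial_cast (n+1-k) k (by omega)
    rw [Nat.descFactorial_eq_factorial_mul_choose] at h1
    have h2 : ∀ j ∈ Finset.range k, (((n+1-k:ℕ):ℝ) - j) = (n:ℝ) + 1 - k - j := by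
      intro j _
      rw [Nat.cast_sub (by omega)]
      push_cast
      ring
    rw [Finset.prod_congr rfl h2] at h1
    rw [← h1]
    push_cast
    ring
  rw [dC, dfact_ratio k n (by omega)]
  rw [Finset.prod_div_distrib]
  have hQ : (∏ j ∈ Finset.range k, (2*(n:ℝ)+1-2*(j:ℝ))) ≠ 0 :=
    Finset.prod_ne_zero_iff.2 (fun j _ => denom_ne_zero n j)
  rw [← hc]
  have hd1 : ((2*(n-k)+1)‼ : ℝ) ≠ 0 := by positivity
  have hd2 : ((2*k-1)‼ : ℝ) ≠ 0 := by positivity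
  have hd3 : ((k ! : ℕ) : ℝ) ≠ 0 := by positivity
  field_simp

lemma sC_tendsto (k : ℕ) :
    Tendsto (fun n : ℕ => sC n k) atTop (𝓝 ((-1)^k / (2*k+1)!)) := by
  have hprod : Tendsto (fun n : ℕ => ∏ j ∈ Finset.range k, (((n:ℝ) - k - j)/(2*(n:ℝ)+1-2*(j:ℝ))))
      atTop (𝓝 (∏ _j ∈ Finset.range k, (1/2 : ℝ))) := by
    apply tendsto_finset_prod
    intro j _
    have := tend_factor ((k:ℝ) + j) j
    apply this.congr
    intro n
    congr 1
    ring
  have hval : (∏ _j ∈ Finset.range k, (1/2 : ℝ)) = (1/2)^k := by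
    rw [Finset.prod_const, Finset.card_range]
  rw [hval] at hprod
  have h2 : Tendsto (fun n : ℕ => (-1:ℝ)^k / (((2*k+1)‼ : ℕ) * (k ! : ℕ))
      * ∏ j ∈ Finset.range k, (((n:ℝ) - k - j)/(2*(n:ℝ)+1-2*(j:ℝ)))) atTop
      (𝓝 ((-1:ℝ)^k / (((2*k+1)‼ : ℕ) * (k ! : ℕ)) * (1/2)^k)) :=
    hprod.const_mul _
  have hfin : (-1:ℝ)^k / (((2*k+1)‼ : ℕ) * (k ! : ℕ)) * (1/2)^k = (-1)^k / (2*k+1)! := by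
    rw [fact_odd_eq k]
    have hd2 : ((2*k+1)‼ : ℝ) ≠ 0 := by positivity
    have hd3 : ((k ! : ℕ) : ℝ) ≠ 0 := by positivity
    field_simp
    ring
    rw [← mul_pow]; norm_num
  rw [hfin] at h2
  apply h2.congr'
  filter_upwards [eventually_ge_atTop (2*k)] with n hn
  exact (sC_prod_form n k hn).symm

lemma dC_tendsto (k : ℕ) :
    Tendsto (fun n : ℕ => dC n k) atTop (𝓝 ((-1)^k / (2*k)!)) := by
  have hprod : Tendsto (fun n : ℕ => ∏ j ∈ Finset.range k, (((n:ℝ) + 1 - k - j)/(2*(n:ℝ)+1-2*(j:ℝ))))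
      atTop (𝓝 (∏ _j ∈ Finset.range k, (1/2 : ℝ))) := by
    apply tendsto_finset_prod
    intro j _
    have := tend_factor ((k:ℝ) + j - 1) j
    apply this.congr
    intro n
    congr 1
    ring
  have hval : (∏ _j ∈ Finset.range k, (1/2 : ℝ)) = (1/2)^k := by
    rw [Finset.prod_const, Finset.card_range]
  rw [hval] at hprod
  have h2 : Tendsto (fun n : ℕ => (-1:ℝ)^k / (((2*k-1)‼ : ℕ) * (k ! : ℕ))
      * ∏ j ∈ Finset.range k, (((n:ℝ) + 1 - k - j)/(2*(n:ℝ)+1-2*(j:ℝ)))) atTop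
      (𝓝 ((-1:ℝ)^k / (((2*k-1)‼ : ℕ) * (k ! : ℕ)) * (1/2)^k)) :=
    hprod.const_mul _
  have hfin : (-1:ℝ)^k / (((2*k-1)‼ : ℕ) * (k ! : ℕ)) * (1/2)^k = (-1)^k / (2*k)! := by
    rw [fact_even_eq k]
    have hd2 : ((2*k-1)‼ : ℝ) ≠ 0 := by positivity
    have hd3 : ((k ! : ℕ) : ℝ) ≠ 0 := by positivity
    field_simp
    ring
    rw [← mul_pow]; norm_num
  rw [hfin] at h2
  apply h2.congr'
  filter_upwards [eventually_ge_atTop (2*k)] with n hn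
  exact (dC_prod_form n k hn).symm

end CotCF3


open CotCF CotCF2 CotCF3

/-- For `0 < x < π`, the continued fraction with coefficients `c₀ = 1/3`,
`c_n = −1/((2n+1)(2n+3))` for `n ≥ 1` converges to `1 − x·cot x`.  The continued
fraction is the limit of the convergents `R_n/S_n`, where `R` and `S` satisfy
`R_{n+1} = R_n + c_{n+1} x² R_{n−1}` with `R_{−1} = 0`, `R₀ = x²/3`, `S_{−1} = S₀ = 1`
(here encoded with an index shift so that `R (n+1)` stands for `R_n`). -/
theorem cot_continued_fraction (x : ℝ) (hx : x ∈ Set.Ioo 0 π)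
    (c : ℕ → ℝ) (hc0 : c 0 = 1 / 3)
    (hc : ∀ n : ℕ, c (n + 1) = -1 / ((2 * (n : ℝ) + 3) * (2 * (n : ℝ) + 5)))
    (R S : ℕ → ℝ)
    (hR0 : R 0 = 0) (hR1 : R 1 = x ^ 2 / 3) (hS0 : S 0 = 1) (hS1 : S 1 = 1)
    (hRrec : ∀ n : ℕ, R (n + 2) = R (n + 1) + c (n + 1) * x ^ 2 * R n)
    (hSrec : ∀ n : ℕ, S (n + 2) = S (n + 1) + c (n + 1) * x ^ 2 * S n) :
    Tendsto (fun n : ℕ => R (n + 1) / S (n + 1)) atTop (nhds (1 - x * Real.cot x)) := by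
  obtain ⟨hx0, hxpi⟩ := hx
  have hsin : 0 < Real.sin x := Real.sin_pos_of_pos_of_lt_pi hx0 hxpi
  have hxne : x ≠ 0 := hx0.ne'
  -- auxiliary: vanishing of coefficients
  have hzS : ∀ n k : ℕ, n + 1 ≤ k → sC n k = 0 := fun n k h => sC_eq_zero (by omega)
  have hzD : ∀ n k : ℕ, n + 1 ≤ k → dC n k = 0 := fun n k h => dC_eq_zero (by omega)
  -- the representation of S
  have hS_rep : ∀ n, S n = ∑' k, sC n k * x^(2*k) := by
    apply rep x (fun n => c (n+1)) S sC hSrec hzS (fun n => by rw [sC_zero, sC_zero])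
    · intro n k
      rw [hc n]
      exact sC_rec n k
    · rw [hS0, tsum_eq_single 0 (fun k hk => by
        rw [sC_eq_zero (show (0:ℕ) < 2*k by omega), zero_mul])]
      rw [sC_zero]; norm_num
    · rw [hS1, tsum_eq_single 0 (fun k hk => by
        rw [sC_eq_zero (show (1:ℕ) < 2*k by omega), zero_mul])]
      rw [sC_zero]; norm_num
  -- the representation of D = S - R
  have hD_rep : ∀ n, S n - R n = ∑' k, dC n k * x^(2*k) := by
    apply rep x (fun n => c (n+1)) (fun n => S n - R n) dC _ hzD
      (fun n => by rw [dC_zero, dC_zero])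
    · intro n k
      rw [hc n]
      exact dC_rec n k
    · rw [hS0, hR0, tsum_eq_single 0 (fun k hk => by
        rw [dC_eq_zero (show (0:ℕ) + 1 < 2*k by omega), zero_mul])]
      rw [dC_zero]; norm_num
    · rw [hS1, hR1]
      rw [tsum_eq_sum (s := Finset.range 2) (fun k hk => by
        rw [dC_eq_zero (show (1:ℕ) + 1 < 2*k by (simp at hk; omega)), zero_mul])]
      rw [Finset.sum_range_succ, Finset.sum_range_one, dC_zero]
      have h11 : dC 1 1 = -(1/3) := by
        simp [dC, Nat.doubleFactorial]
        norm_num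
      rw [h11]
      ring
    · intro n
      rw [hSrec n, hRrec n]
      ring
  -- Tannery for S
  have hboundS : ∀ (n k : ℕ), ‖sC n k * x^(2*k)‖ ≤ (x^2)^k / k ! := by
    intro n k
    rw [norm_mul, Real.norm_eq_abs, Real.norm_eq_abs, abs_of_pos (by positivity : (0:ℝ) < x^(2*k))]
    have h1 : |sC n k| ≤ 1/(k ! : ℝ) := by
      refine (sC_abs_le n k).trans ?_
      apply div_le_div_of_nonneg_left (by norm_num) (by positivity)
      exact_mod_cast Nat.factorial_le (by omega)
    calc |sC n k| * x^(2*k) ≤ (1/(k ! : ℝ)) * x^(2*k) := by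
          apply mul_le_mul_of_nonneg_right h1 (by positivity)
      _ = (x^2)^k / k ! := by rw [← pow_mul]; ring
  have hboundD : ∀ (n k : ℕ), ‖dC n k * x^(2*k)‖ ≤ (x^2)^k / k ! := by
    intro n k
    rw [norm_mul, Real.norm_eq_abs, Real.norm_eq_abs, abs_of_pos (by positivity : (0:ℝ) < x^(2*k))]
    have h1 : |dC n k| ≤ 1/(k ! : ℝ) := by
      refine (dC_abs_le n k).trans ?_
      apply div_le_div_of_nonneg_left (by norm_num) (by positivity)
      exact_mod_cast Nat.factorial_le (by omega)
    calc |dC n k| * x^(2*k) ≤ (1/(k ! : ℝ)) * x^(2*k) := by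
          apply mul_le_mul_of_nonneg_right h1 (by positivity)
      _ = (x^2)^k / k ! := by rw [← pow_mul]; ring
  have hTS : Tendsto (fun n : ℕ => ∑' k, sC (n+1) k * x^(2*k)) atTop
      (𝓝 (∑' k : ℕ, ((-1:ℝ)^k/(2*k+1)!) * x^(2*k))) := by
    apply tendsto_tsum_of_dominated_convergence (Real.summable_pow_div_factorial (x^2))
    · intro k
      exact (((sC_tendsto k).comp (tendsto_add_atTop_nat 1)).mul_const _)
    · exact Eventually.of_forall (fun n => hboundS (n+1))
  have hTD : Tendsto (fun n : ℕ => ∑' k, dC (n+1) k * x^(2*k)) atTop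
      (𝓝 (∑' k : ℕ, ((-1:ℝ)^k/(2*k)!) * x^(2*k))) := by
    apply tendsto_tsum_of_dominated_convergence (Real.summable_pow_div_factorial (x^2))
    · intro k
      exact (((dC_tendsto k).comp (tendsto_add_atTop_nat 1)).mul_const _)
    · exact Eventually.of_forall (fun n => hboundD (n+1))
  -- identify the limits
  have hsin_val : (∑' k : ℕ, ((-1:ℝ)^k/(2*k+1)!) * x^(2*k)) = Real.sin x / x := by
    have hs := (Real.hasSum_sin x).div_const x
    have heq : ∀ k : ℕ, (-1:ℝ)^k * x^(2*k+1)/(2*k+1)! / x = ((-1:ℝ)^k/(2*k+1)!) * x^(2*k) := by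
      intro k
      rw [pow_succ]
      field_simp
    rw [← (hs.congr_fun (fun k => (heq k).symm)).tsum_eq]
  have hcos_val : (∑' k : ℕ, ((-1:ℝ)^k/(2*k)!) * x^(2*k)) = Real.cos x := by
    have hs := Real.hasSum_cos x
    have heq : ∀ k : ℕ, (-1:ℝ)^k * x^(2*k)/(2*k)! = ((-1:ℝ)^k/(2*k)!) * x^(2*k) := by
      intro k; ring
    rw [← (hs.congr_fun (fun k => (heq k).symm)).tsum_eq]
  rw [hsin_val] at hTS
  rw [hcos_val] at hTD
  have hS' : Tendsto (fun n : ℕ => S (n+1)) atTop (𝓝 (Real.sin x / x)) :=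
    hTS.congr (fun n => (hS_rep (n+1)).symm)
  have hD' : Tendsto (fun n : ℕ => S (n+1) - R (n+1)) atTop (𝓝 (Real.cos x)) :=
    hTD.congr (fun n => (hD_rep (n+1)).symm)
  have hR' : Tendsto (fun n : ℕ => R (n+1)) atTop (𝓝 (Real.sin x / x - Real.cos x)) := by
    have := hS'.sub hD'
    refine this.congr (fun n => by ring)
  have hne : Real.sin x / x ≠ 0 := div_ne_zero hsin.ne' hxne
  have hdiv := hR'.div hS' hne
  have hval : (Real.sin x / x - Real.cos x)/(Real.sin x / x) = 1 - x * Real.cot x := by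
    rw [Real.cot_eq_cos_div_sin]
    field_simp
  rwa [hval] at hdiv
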